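/- Let A, B be C*-algebras, A₀ ⊆ A a dense *-subalgebra, and π₀ : A₀ → B a *-homomorphism. Suppose there is a family of positive linear maps {σ_i : B → D_i}_{i∈I} and {ψ_i : A → D_i}_{i∈I} into C*-algebras D_i such that: (a) {σ_i}_{i∈I} is jointly faithful on B; (b) {ψ_i}_{i∈I} is jointly essentially faithful on A; (c) σ_i ∘ π₀ = ψ_i|_{A₀} for every i ∈ I. Then π₀ extends uniquely to an injective *-homomorphism π : A → B; in particular, the family {ψ_i}_{i∈I} is jointly faithful. -/

import Mathlib

open scoped ComplexOrder

open scoped ComplexStarModule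

/-- `K_ψ = {a | ψ (x * a * y) = 0 for all x, y}`. -/
def Kset {E F : Type*} [Mul E] [Zero F] (ψ : E → F) : Set E :=
  {a | ∀ x y : E, ψ (x * a * y) = 0}

/-- `L_ψ = {a | ψ (star a * a) = 0}`. -/
def Lset {E F : Type*} [Mul E] [Star E] [Zero F] (ψ : E → F) : Set E :=
  {a | ψ (star a * a) = 0}

section Aux

variable {B D : Type*}
  [NonUnitalCStarAlgebra B] [PartialOrder B] [StarOrderedRing B]
  [NonUnitalCStarAlgebra D] [PartialOrder D] [StarOrderedRing D]

lemma aux_norm_realPart_le (x : B) : ‖(ℜ x : B)‖ ≤ ‖x‖ := by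
  rw [realPart_apply_coe]
  calc ‖(⅟2:ℝ) • (x + star x)‖ ≤ 2⁻¹ * (‖x‖ + ‖star x‖) := by
        rw [norm_smul]
        gcongr
        · norm_num
        · exact norm_add_le _ _
    _ = ‖x‖ := by rw [norm_star]; ring

lemma aux_norm_imaginaryPart_le (x : B) : ‖(ℑ x : B)‖ ≤ ‖x‖ := by
  rw [imaginaryPart_apply_coe]
  calc ‖(-Complex.I) • ((⅟2:ℝ) • (x - star x))‖ = 2⁻¹ * ‖x - star x‖ := by
        rw [norm_smul, norm_smul]; norm_num
    _ ≤ ‖x‖ := by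
        have := norm_sub_le x (star x)
        rw [norm_star] at this; linarith

omit [PartialOrder B] [StarOrderedRing B] in
lemma aux_norm_posPart_le (a : B) (ha : IsSelfAdjoint a) : ‖a⁺‖ ≤ ‖a‖ := by
  rw [CFC.posPart_def]
  apply norm_cfcₙ_le
  intro x hx
  calc ‖x⁺‖ ≤ ‖x‖ := by
        rw [Real.norm_eq_abs, Real.norm_eq_abs, abs_of_nonneg (posPart_nonneg x),
          _root_.posPart_def]
        exact sup_le (le_abs_self x) (abs_nonneg x)
    _ ≤ ‖a‖ := by simpa [cfcₙ_id ℝ a] using norm_apply_le_norm_cfcₙ (id : ℝ → ℝ) a hx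

omit [PartialOrder B] [StarOrderedRing B] in
lemma aux_norm_negPart_le (a : B) (ha : IsSelfAdjoint a) : ‖a⁻‖ ≤ ‖a‖ := by
  rw [CFC.negPart_def]
  apply norm_cfcₙ_le
  intro x hx
  calc ‖x⁻‖ ≤ ‖x‖ := by
        rw [Real.norm_eq_abs, Real.norm_eq_abs, abs_of_nonneg (negPart_nonneg x),
          _root_.negPart_def]
        exact sup_le (neg_le_abs x) (abs_nonneg x)
    _ ≤ ‖a‖ := by simpa [cfcₙ_id ℝ a] using norm_apply_le_norm_cfcₙ (id : ℝ → ℝ) a hx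

lemma aux_pos_bound (σ : B →ₗ[ℂ] D) (hpos : ∀ b : B, 0 ≤ b → 0 ≤ σ b) :
    ∃ C : ℝ, 0 < C ∧ ∀ b : B, 0 ≤ b → ‖b‖ ≤ 1 → ‖σ b‖ ≤ C := by
  by_contra h
  push_neg at h
  choose b hb0 hb1 hbn using fun n : ℕ => h ((4:ℝ)^n) (by positivity)
  set c : ℕ → B := fun n => ((2:ℝ)⁻¹)^n • b n with hc
  have hcn : ∀ n, 0 ≤ c n := fun n => smul_nonneg (by positivity) (hb0 n)
  have hsum : Summable c := by
    apply Summable.of_norm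
    refine Summable.of_nonneg_of_le (fun n => norm_nonneg _) (fun n => ?_)
      (summable_geometric_of_lt_one (by norm_num) (by norm_num) :
        Summable fun n : ℕ => ((2:ℝ)⁻¹)^n)
    rw [hc, norm_smul]
    calc ‖((2:ℝ)⁻¹)^n‖ * ‖b n‖ ≤ ((2:ℝ)⁻¹)^n * 1 := by
          rw [Real.norm_eq_abs, abs_of_nonneg (by positivity)]
          gcongr
          exact hb1 n
      _ = ((2:ℝ)⁻¹)^n := mul_one _
  set s := ∑' n, c n with hs
  have key : ∀ n, (2:ℝ)^n < ‖σ s‖ := by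
    intro n
    have h2 : σ (c n) ≤ σ s := by
      have h3 : 0 ≤ s - c n := by
        rw [hs, Summable.tsum_eq_add_tsum_ite hsum n, add_sub_cancel_left]
        exact tsum_nonneg fun k => by split <;> simp [hcn k]
      have := hpos _ h3
      rw [map_sub, sub_nonneg] at this
      exact this
    have h4 : ‖σ (c n)‖ ≤ ‖σ s‖ :=
      CStarAlgebra.norm_le_norm_of_nonneg_of_le (hpos _ (hcn n)) h2
    refine lt_of_lt_of_le ?_ h4
    have hcoe : c n = ((2:ℂ)⁻¹ ^ n) • b n := by
      rw [hc]
      show ((2:ℝ)⁻¹ ^ n) • b n = _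
      rw [show ((2:ℂ)⁻¹ ^ n) = (((2:ℝ)⁻¹ ^ n : ℝ) : ℂ) by push_cast; ring,
        Complex.coe_smul]
    have h5 : σ (c n) = ((2:ℂ)⁻¹ ^ n) • σ (b n) := by rw [hcoe, map_smul]
    rw [h5, norm_smul]
    have h6 : ‖(2:ℂ)⁻¹ ^ n‖ = ((2:ℝ)⁻¹)^n := by
      rw [norm_pow]; norm_num
    rw [h6]
    calc (2:ℝ)^n = ((2:ℝ)⁻¹)^n * (4:ℝ)^n := by
          rw [← mul_pow]; norm_num
      _ < ((2:ℝ)⁻¹)^n * ‖σ (b n)‖ := by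
          exact (mul_lt_mul_iff_right₀ (by positivity)).mpr (hbn n)
  obtain ⟨n, hn⟩ := pow_unbounded_of_one_lt ‖σ s‖ (by norm_num : (1:ℝ) < 2)
  exact absurd (key n) (not_lt.mpr hn.le)

lemma aux_pos_cont (σ : B →ₗ[ℂ] D) (hpos : ∀ b : B, 0 ≤ b → 0 ≤ σ b) :
    Continuous σ := by
  obtain ⟨C, hC, hbd⟩ := aux_pos_bound σ hpos
  have hb2 : ∀ b : B, 0 ≤ b → ‖σ b‖ ≤ C * ‖b‖ := by
    intro b hb
    rcases eq_or_ne b 0 with rfl | hb0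
    · simp
    · have hn : 0 < ‖b‖ := norm_pos_iff.mpr hb0
      have h1 : (0:B) ≤ (‖b‖⁻¹ : ℝ) • b := smul_nonneg (by positivity) hb
      have h2 : ‖(‖b‖⁻¹ : ℝ) • b‖ ≤ 1 := by
        rw [norm_smul, Real.norm_eq_abs, abs_of_nonneg (by positivity),
          inv_mul_cancel₀ hn.ne']
      have h3 := hbd _ h1 h2
      rw [← Complex.coe_smul, map_smul, norm_smul, Complex.norm_real, Real.norm_eq_abs,
        abs_of_nonneg (by positivity)] at h3
      calc ‖σ b‖ = ‖b‖ * (‖b‖⁻¹ * ‖σ b‖) := by field_simp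
        _ ≤ ‖b‖ * C := by gcongr
        _ = C * ‖b‖ := mul_comm _ _
  have bound : ∀ x : B, ‖σ x‖ ≤ (4*C) * ‖x‖ := by
    intro x
    have hx := CStarAlgebra.linear_combination_nonneg x
    have hσx : σ x = σ ((ℜ x : B)⁺) - σ ((ℜ x : B)⁻)
        + (Complex.I • σ ((ℑ x : B)⁺) - Complex.I • σ ((ℑ x : B)⁻)) := by
      conv_lhs => rw [← hx]
      simp [map_add, map_sub, map_smul]
    have e1 : ‖σ ((ℜ x : B)⁺)‖ ≤ C * ‖x‖ := by
      refine (hb2 _ (CFC.posPart_nonneg _)).trans ?_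
      gcongr
      exact (aux_norm_posPart_le _ (ℜ x).2).trans (aux_norm_realPart_le x)
    have e2 : ‖σ ((ℜ x : B)⁻)‖ ≤ C * ‖x‖ := by
      refine (hb2 _ (CFC.negPart_nonneg _)).trans ?_
      gcongr
      exact (aux_norm_negPart_le _ (ℜ x).2).trans (aux_norm_realPart_le x)
    have e3 : ‖σ ((ℑ x : B)⁺)‖ ≤ C * ‖x‖ := by
      refine (hb2 _ (CFC.posPart_nonneg _)).trans ?_
      gcongr
      exact (aux_norm_posPart_le _ (ℑ x).2).trans (aux_norm_imaginaryPart_le x)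
    have e4 : ‖σ ((ℑ x : B)⁻)‖ ≤ C * ‖x‖ := by
      refine (hb2 _ (CFC.negPart_nonneg _)).trans ?_
      gcongr
      exact (aux_norm_negPart_le _ (ℑ x).2).trans (aux_norm_imaginaryPart_le x)
    calc ‖σ x‖ ≤ ‖σ ((ℜ x : B)⁺)‖ + ‖σ ((ℜ x : B)⁻)‖
          + (‖Complex.I • σ ((ℑ x : B)⁺)‖ + ‖Complex.I • σ ((ℑ x : B)⁻)‖) := by
          rw [hσx]
          refine (norm_add_le _ _).trans ?_
          gcongr
          · exact norm_sub_le _ _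
          · exact norm_sub_le _ _
      _ ≤ C * ‖x‖ + C * ‖x‖ + (C * ‖x‖ + C * ‖x‖) := by
          rw [norm_smul, norm_smul, Complex.norm_I, one_mul, one_mul]
          gcongr
      _ = (4*C) * ‖x‖ := by ring
  exact AddMonoidHomClass.continuous_of_bound σ (4*C) bound

end Aux

/-- Given a dense *-subalgebra `A₀ ⊆ A`, a *-homomorphism `π₀ : A₀ → B`, and
families of positive linear maps `σ i : B → D i`, `ψ i : A → D i` with (a) `{σ i}` jointly
faithful, (b) `{ψ i}` jointly essentially faithful, (c) `σ i ∘ π₀ = ψ i` on `A₀`, the map `π₀`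
extends uniquely to a *-homomorphism `π : A → B`, every such extension is injective, and
`{ψ i}` is jointly faithful. -/
theorem stmt3 {A B : Type*}
    [NonUnitalCStarAlgebra A] [PartialOrder A] [StarOrderedRing A]
    [NonUnitalCStarAlgebra B] [PartialOrder B] [StarOrderedRing B]
    (A₀ : NonUnitalStarSubalgebra ℂ A) (hdense : Dense (A₀ : Set A))
    (π₀ : ↥A₀ →⋆ₙₐ[ℂ] B)
    {I : Type*} (D : I → Type*)
    [∀ i, NonUnitalCStarAlgebra (D i)] [∀ i, PartialOrder (D i)] [∀ i, StarOrderedRing (D i)]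
    (σ : ∀ i, B →ₗ[ℂ] D i) (ψ : ∀ i, A →ₗ[ℂ] D i)
    (hσpos : ∀ i, ∀ b : B, 0 ≤ b → 0 ≤ σ i b)
    (hψpos : ∀ i, ∀ a : A, 0 ≤ a → 0 ≤ ψ i a)
    (ha : (⋂ i, Lset fun b : B => σ i b) = ({0} : Set B))
    (hb : (⋂ i, Kset fun a : A => ψ i a) = ({0} : Set A))
    (hc : ∀ i, ∀ a : ↥A₀, σ i (π₀ a) = ψ i (a : A)) :
    (∃! π : A →⋆ₙₐ[ℂ] B, ∀ a : ↥A₀, π (a : A) = π₀ a) ∧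
    (∀ π : A →⋆ₙₐ[ℂ] B, (∀ a : ↥A₀, π (a : A) = π₀ a) → Function.Injective π) ∧
    (⋂ i, Lset fun a : A => ψ i a) = ({0} : Set A) := by
  classical
  have hψc : ∀ i, Continuous (ψ i) := fun i => aux_pos_cont _ (hψpos i)
  have hσc : ∀ i, Continuous (σ i) := fun i => aux_pos_cont _ (hσpos i)
  -- the graph of `π₀` and its closure
  set g : ↥A₀ →⋆ₙₐ[ℂ] A × B := (NonUnitalStarSubalgebraClass.subtype A₀).prod π₀ with hg
  set G₀ : NonUnitalStarSubalgebra ℂ (A × B) := NonUnitalStarAlgHom.range g with hG₀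
  set G : NonUnitalStarSubalgebra ℂ (A × B) := G₀.topologicalClosure with hG
  haveI hGc : IsClosed (G : Set (A × B)) := G₀.isClosed_topologicalClosure
  set q : ↥G →⋆ₙₐ[ℂ] A :=
    (NonUnitalStarAlgHom.fst ℂ A B).comp (NonUnitalStarSubalgebraClass.subtype G) with hq
  -- on `G`, `σ i` of the second component equals `ψ i` of the first
  have hGeq : ∀ i, ∀ p : A × B, p ∈ G → σ i p.2 = ψ i p.1 := by
    intro i p hp
    have hEq : Set.EqOn (fun p : A × B => σ i p.2) (fun p : A × B => ψ i p.1)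
        (G₀ : Set (A × B)) := by
      rintro _ ⟨a, rfl⟩
      exact hc i a
    exact hEq.closure ((hσc i).comp continuous_snd) ((hψc i).comp continuous_fst) hp
  -- `q` is injective
  have hker : ∀ z : ↥G, q z = 0 → z = 0 := by
    intro z hz
    have hz1 : ((z : A × B)).1 = 0 := hz
    have hmem : (star (z : A × B) * (z : A × B)) ∈ G := mul_mem (star_mem z.2) z.2
    have hLz : ∀ i, σ i (star ((z : A × B)).2 * ((z : A × B)).2) = 0 := by
      intro i
      have := hGeq i _ hmem
      simpa [hz1] using this
    have : ((z : A × B)).2 ∈ ({0} : Set B) := by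
      rw [← ha]
      exact Set.mem_iInter.mpr fun i => hLz i
    have hz2 : ((z : A × B)).2 = 0 := this
    exact Subtype.ext (Prod.ext hz1 hz2)
  have hqinj : Function.Injective q := by
    intro x y hxy
    rw [← sub_eq_zero]
    apply hker
    rw [map_sub, hxy, sub_self]
  -- `q` is a surjective isometry
  have hiso : Isometry q := NonUnitalStarAlgHom.isometry q hqinj
  have hsub : (A₀ : Set A) ⊆ Set.range ⇑q := by
    intro a haA
    exact ⟨⟨g ⟨a, haA⟩, G₀.le_topologicalClosure ⟨⟨a, haA⟩, rfl⟩⟩, rfl⟩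
  have hqsurj : Function.Surjective ⇑q := by
    have hcl : IsClosed (Set.range ⇑q) := hiso.isClosedEmbedding.isClosed_range
    have hd : Dense (Set.range ⇑q) := hdense.mono hsub
    intro a
    have : Set.range ⇑q = Set.univ := by
      rw [← hcl.closure_eq, hd.closure_eq]
    exact (Set.eq_univ_iff_forall.mp this a)
  set e : ↥G ≃ A := Equiv.ofBijective ⇑q ⟨hqinj, hqsurj⟩ with he
  have hqu : ∀ a : A, q (e.symm a) = a := fun a => e.apply_symm_apply a
  have hu : ∀ (a : A) (x : ↥G), q x = a → e.symm a = x := fun a x hx => by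
    apply hqinj; rw [hqu, hx]
  -- the extension
  set π : A →⋆ₙₐ[ℂ] B :=
    { toFun := fun a => ((e.symm a : A × B)).2
      map_add' := fun a a' => by
        show ((e.symm (a + a') : A × B)).2 = ((e.symm a : A × B)).2 + ((e.symm a' : A × B)).2
        rw [hu (a + a') (e.symm a + e.symm a') (by rw [map_add, hqu, hqu])]
        rfl
      map_smul' := fun c a => by
        show ((e.symm (c • a) : A × B)).2 = c • ((e.symm a : A × B)).2
        rw [hu (c • a) (c • e.symm a) (by rw [map_smul, hqu])]
        rfl
      map_zero' := by
        show ((e.symm (0 : A) : A × B)).2 = 0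
        rw [hu 0 0 (map_zero q)]
        rfl
      map_mul' := fun a a' => by
        show ((e.symm (a * a') : A × B)).2 = ((e.symm a : A × B)).2 * ((e.symm a' : A × B)).2
        rw [hu (a * a') (e.symm a * e.symm a') (by rw [map_mul, hqu, hqu])]
        rfl
      map_star' := fun a => by
        show ((e.symm (star a) : A × B)).2 = star ((e.symm a : A × B)).2
        rw [hu (star a) (star (e.symm a)) (by rw [map_star, hqu])]
        rfl } with hπ
  have hπext : ∀ a : ↥A₀, π (a : A) = π₀ a := by
    intro a
    have hmem : g a ∈ G := G₀.le_topologicalClosure ⟨a, rfl⟩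
    have : e.symm (a : A) = ⟨g a, hmem⟩ := hu _ _ rfl
    show ((e.symm (a : A) : A × B)).2 = π₀ a
    rw [this]
    rfl
  -- any extension is continuous and intertwines `σ i` and `ψ i`
  have hcontπ : ∀ π' : A →⋆ₙₐ[ℂ] B, Continuous ⇑π' := fun π' =>
    AddMonoidHomClass.continuous_of_bound π' 1
      (fun a => by simpa using NonUnitalStarAlgHom.norm_apply_le π' a)
  have hinter : ∀ π' : A →⋆ₙₐ[ℂ] B, (∀ a : ↥A₀, π' (a : A) = π₀ a) →
      ∀ i, ∀ a : A, σ i (π' a) = ψ i a := by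
    intro π' hπ' i a
    have hEq : Set.EqOn (fun a : A => σ i (π' a)) (fun a : A => ψ i a) (A₀ : Set A) := by
      intro x hx
      show σ i (π' x) = ψ i x
      rw [hπ' ⟨x, hx⟩]
      exact hc i ⟨x, hx⟩
    have := hEq.closure ((hσc i).comp (hcontπ π')) (hψc i)
    exact this (by rw [hdense.closure_eq]; trivial)
  -- injectivity of any extension
  have hinj : ∀ π' : A →⋆ₙₐ[ℂ] B, (∀ a : ↥A₀, π' (a : A) = π₀ a) → Function.Injective π' := by
    intro π' hπ' x y hxy
    rw [← sub_eq_zero]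
    have hz : π' (x - y) = 0 := by rw [map_sub, hxy, sub_self]
    have : (x - y) ∈ ({0} : Set A) := by
      rw [← hb]
      refine Set.mem_iInter.mpr fun i => ?_
      intro u v
      show ψ i (u * (x - y) * v) = 0
      rw [← hinter π' hπ' i, map_mul π', map_mul π', hz, mul_zero, zero_mul, map_zero]
    exact this
  -- uniqueness
  have huniq : ∀ π' : A →⋆ₙₐ[ℂ] B, (∀ a : ↥A₀, π' (a : A) = π₀ a) → π' = π := by
    intro π' hπ'
    have hEq : Set.EqOn ⇑π' ⇑π (A₀ : Set A) := by
      intro x hx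
      show π' x = π x
      rw [hπ' ⟨x, hx⟩, hπext ⟨x, hx⟩]
    have := hEq.closure (hcontπ π') (hcontπ π)
    ext a
    exact this (by rw [hdense.closure_eq]; trivial)
  refine ⟨⟨π, hπext, huniq⟩, hinj, ?_⟩
  -- joint faithfulness of `ψ`
  ext a
  simp only [Set.mem_iInter, Set.mem_singleton_iff]
  constructor
  · intro h
    have hπa : π a = 0 := by
      have : π a ∈ ({0} : Set B) := by
        rw [← ha]
        refine Set.mem_iInter.mpr fun i => ?_
        show σ i (star (π a) * π a) = 0
        rw [← map_star, ← map_mul, hinter π hπext i]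
        exact h i
      exact this
    have := hinj π hπext (a₁ := a) (a₂ := 0) (by rw [hπa, map_zero])
    exact this
  · rintro rfl i
    show ψ i (star 0 * 0) = 0
    rw [mul_zero, map_zero]
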